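/- Let $A$ be a commutative local ring with maximal ideal $\mathfrak{m}$ and residue field $k = A/\mathfrak{m}$, and let $Q \in A[x]$ be a monic polynomial of degree $d \ge 1$ whose reduction modulo $\mathfrak{m}$ is separable over $k$ (i.e., the reduction of $Q$ and its derivative generate the unit ideal of $k[x]$). Then there exist polynomials $U, V \in A[x]$ with $\deg U \le d-2$ and $\deg V \le d-1$ such that $U\,Q + V\,Q' = 1$ in $A[x]$. -/

import Mathlib

open Polynomial

lemma aux_bezout_kedlaya {K : Type*} [Field K] {q : K[X]} {d : ℕ}
    (hq : q.Monic) (hdeg : q.degree = (d : ℕ))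
    (hco : IsCoprime q (derivative q)) (p : K[X])
    (hp : p.degree < ((2 * d : ℕ) : WithBot ℕ)) :
    ∃ a b : K[X], a.degree < (d : ℕ) ∧ b.degree < (d : ℕ) ∧
      a * q + b * derivative q = p := by
  obtain ⟨u, v, huv⟩ := hco
  have hq0 : q ≠ 0 := hq.ne_zero
  set a : K[X] := u * p + ((v * p) /ₘ q) * derivative q with ha
  set b : K[X] := (v * p) %ₘ q with hb
  have hmd := modByMonic_add_div (v * p) q
  have hid : a * q + b * derivative q = p := by
    rw [ha, hb]; linear_combination p * huv + derivative q * hmd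
  have hbd : b.degree < (d : ℕ) := hdeg ▸ degree_modByMonic_lt (v * p) hq
  have hbq' : (b * derivative q).degree < ((2 * d : ℕ) : WithBot ℕ) := by
    rcases eq_or_ne (b * derivative q) 0 with h0 | h0
    · rw [h0, degree_zero]; exact WithBot.bot_lt_coe _
    · have hb0 : b ≠ 0 := fun h => h0 (by rw [h, zero_mul])
      have hq'0 : derivative q ≠ 0 := fun h => h0 (by rw [h, mul_zero])
      rw [degree_mul, degree_eq_natDegree hb0, degree_eq_natDegree hq'0]
      have h1 : b.natDegree < d := by
        rw [degree_eq_natDegree hb0] at hbd; exact_mod_cast hbd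
      have h2 : (derivative q).natDegree < d := by
        have := degree_derivative_lt hq0
        rw [hdeg, degree_eq_natDegree hq'0] at this; exact_mod_cast this
      exact_mod_cast Nat.add_lt_add h1 h2 |>.trans_le (by omega)
  have haq : (a * q).degree < ((2 * d : ℕ) : WithBot ℕ) := by
    have : a * q = p - b * derivative q := by linear_combination hid
    rw [this]
    exact (degree_sub_le _ _).trans_lt (max_lt hp hbq')
  refine ⟨a, b, ?_, hbd, hid⟩
  rcases eq_or_ne a 0 with h0 | h0
  · rw [h0, degree_zero]; exact WithBot.bot_lt_coe _
  · rw [hq.degree_mul, hdeg, degree_eq_natDegree h0] at haq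
    rw [degree_eq_natDegree h0]
    have : a.natDegree + d < 2 * d := by exact_mod_cast haq
    exact_mod_cast (by omega : a.natDegree < d)

/-- Let `A` be a commutative local ring with residue field `k`, and let `Q ∈ A[x]` be monic of
degree `d ≥ 1` with separable reduction modulo the maximal ideal.  Then there are polynomials
`U, V ∈ A[x]` with `deg U ≤ d - 2` and `deg V ≤ d - 1` (the degree bounds being expressed as
`deg U + 2 ≤ d` and `deg V + 1 ≤ d`, so that the zero polynomial satisfies any bound) such
that `U Q + V Q' = 1`. -/
theorem kedlaya_bezout_for_Q
    (A : Type*) [CommRing A] [IsLocalRing A]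
    (Q : Polynomial A) (d : ℕ) (hd : 1 ≤ d)
    (hmonic : Q.Monic) (hQdeg : Q.degree = (d : ℕ))
    (hsep : (Q.map (IsLocalRing.residue A)).Separable) :
    ∃ U V : Polynomial A,
      U.degree + 2 ≤ (d : WithBot ℕ) ∧
      V.degree + 1 ≤ (d : WithBot ℕ) ∧
      U * Q + V * derivative Q = 1 := by
  classical
  set φ := IsLocalRing.residue A
  have hφs : Function.Surjective φ := Ideal.Quotient.mk_surjective
  set Qb : Polynomial (IsLocalRing.ResidueField A) := Q.map φ with hQb
  have hQbm : Qb.Monic := hmonic.map φ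
  have hQbdeg : Qb.degree = (d : ℕ) := by rw [hQb, hmonic.degree_map, hQdeg]
  -- The submodules for the Nakayama argument
  set S : Submodule A (Polynomial A) :=
    (degreeLT A d).map (LinearMap.mulRight A Q) ⊔
      (degreeLT A d).map (LinearMap.mulRight A (derivative Q)) with hS
  set N : Submodule A (Polynomial A) := degreeLT A (2 * d) with hN
  have hNfg : N.FG := by
    rw [hN, degreeLT_eq_span_X_pow]
    exact Submodule.fg_span (Finset.finite_toSet _)
  have hjac : IsLocalRing.maximalIdeal A ≤ Ideal.jacobson ⊥ :=
    le_of_eq (IsLocalRing.jacobson_eq_maximalIdeal ⊥ bot_ne_top).symm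
  -- key step: N ≤ S ⊔ m • N
  have hNN : N ≤ S ⊔ (IsLocalRing.maximalIdeal A) • N := by
    intro p hp
    have hpdeg : p.degree < ((2 * d : ℕ) : WithBot ℕ) := mem_degreeLT.1 hp
    have hpbdeg : (p.map φ).degree < ((2 * d : ℕ) : WithBot ℕ) :=
      (degree_map_le).trans_lt hpdeg
    obtain ⟨a, b, hadeg, hbdeg, hab⟩ := aux_bezout_kedlaya hQbm hQbdeg hsep (p.map φ) hpbdeg
    obtain ⟨U, hU, hUdeg⟩ :=
      mem_lifts_and_degree_eq ((mem_lifts _).2 ((map_surjective φ hφs) a))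
    obtain ⟨V, hV, hVdeg⟩ :=
      mem_lifts_and_degree_eq ((mem_lifts _).2 ((map_surjective φ hφs) b))
    have hUd : U.degree < (d : ℕ) := hUdeg ▸ hadeg
    have hVd : V.degree < (d : ℕ) := hVdeg ▸ hbdeg
    set r : Polynomial A := p - (U * Q + V * derivative Q) with hr
    have hrmap : r.map φ = 0 := by
      rw [hr, Polynomial.map_sub, Polynomial.map_add, Polynomial.map_mul, Polynomial.map_mul,
        hU, hV, ← hQb, ← derivative_map, hab, sub_self]
    have hrcoeff : ∀ i, r.coeff i ∈ IsLocalRing.maximalIdeal A := by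
      intro i
      rw [← IsLocalRing.residue_eq_zero_iff]
      have : (r.map φ).coeff i = 0 := by rw [hrmap]; simp
      rwa [coeff_map] at this
    have hUQ : (U * Q).degree < ((2 * d : ℕ) : WithBot ℕ) := by
      rcases eq_or_ne U 0 with h0 | h0
      · rw [h0, zero_mul, degree_zero]; exact WithBot.bot_lt_coe _
      · rw [hmonic.degree_mul, hQdeg, degree_eq_natDegree h0]
        have : U.natDegree < d := by
          rw [degree_eq_natDegree h0] at hUd; exact_mod_cast hUd
        exact_mod_cast (by omega : U.natDegree + d < 2 * d)
    have hVQ' : (V * derivative Q).degree < ((2 * d : ℕ) : WithBot ℕ) := by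
      rcases eq_or_ne (V * derivative Q) 0 with h0 | h0
      · rw [h0, degree_zero]; exact WithBot.bot_lt_coe _
      · have hV0 : V ≠ 0 := fun h => h0 (by rw [h, zero_mul])
        have hQ'0 : derivative Q ≠ 0 := fun h => h0 (by rw [h, mul_zero])
        have h1 : V.natDegree < d := by
          rw [degree_eq_natDegree hV0] at hVd; exact_mod_cast hVd
        have h2 : (derivative Q).natDegree < d := by
          have := degree_derivative_lt hmonic.ne_zero
          rw [hQdeg, degree_eq_natDegree hQ'0] at this; exact_mod_cast this
        calc (V * derivative Q).degree ≤ V.degree + (derivative Q).degree := degree_mul_le _ _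
          _ < ((2 * d : ℕ) : WithBot ℕ) := by
              rw [degree_eq_natDegree hV0, degree_eq_natDegree hQ'0]
              exact_mod_cast Nat.add_lt_add h1 h2 |>.trans_le (by omega)
    have hrdeg : r.degree < ((2 * d : ℕ) : WithBot ℕ) := by
      rw [hr]
      exact (degree_sub_le _ _).trans_lt
        (max_lt hpdeg ((degree_add_le _ _).trans_lt (max_lt hUQ hVQ')))
    have hrN : r ∈ (IsLocalRing.maximalIdeal A) • N := by
      have hnat : r.natDegree < 2 * d := by
        rcases eq_or_ne r 0 with h0 | h0
        · rw [h0, natDegree_zero]; omega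
        · rwa [natDegree_lt_iff_degree_lt h0]
      have hsum := r.as_sum_range' (2 * d) hnat
      rw [hsum]
      refine Submodule.sum_mem _ fun i hi => ?_
      rw [← C_mul_X_pow_eq_monomial, ← smul_eq_C_mul]
      refine Submodule.smul_mem_smul (hrcoeff i) ?_
      rw [hN, mem_degreeLT, degree_X_pow]
      exact_mod_cast Finset.mem_range.1 hi
    have hUQS : U * Q + V * derivative Q ∈ S := by
      rw [hS]
      refine add_mem (Submodule.mem_sup_left ?_) (Submodule.mem_sup_right ?_)
      · exact Submodule.mem_map.2 ⟨U, mem_degreeLT.2 hUd, LinearMap.mulRight_apply ..⟩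
      · exact Submodule.mem_map.2 ⟨V, mem_degreeLT.2 hVd, LinearMap.mulRight_apply ..⟩
    have : p = (U * Q + V * derivative Q) + r := by rw [hr]; ring
    rw [this]
    exact Submodule.add_mem _ (Submodule.mem_sup_left hUQS) (Submodule.mem_sup_right hrN)
  have hNS : N ≤ S := Submodule.le_of_le_smul_of_le_jacobson_bot hNfg hjac hNN
  have hone : (1 : Polynomial A) ∈ S := by
    apply hNS
    rw [hN, mem_degreeLT, degree_one]
    exact_mod_cast (by omega : 0 < 2 * d)
  rw [hS, Submodule.mem_sup] at hone
  obtain ⟨x, hx, y, hy, hxy⟩ := hone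
  obtain ⟨U, -, rfl⟩ := Submodule.mem_map.1 hx
  obtain ⟨V, -, rfl⟩ := Submodule.mem_map.1 hy
  rw [LinearMap.mulRight_apply, LinearMap.mulRight_apply] at hxy
  -- Now fix the degrees by division by the monic polynomial Q
  set V₀ : Polynomial A := V %ₘ Q with hV₀
  set U₀ : Polynomial A := U + (V /ₘ Q) * derivative Q with hU₀
  have hmd := modByMonic_add_div V Q
  have hid : U₀ * Q + V₀ * derivative Q = 1 := by
    rw [hU₀, hV₀]; linear_combination hxy + derivative Q * hmd
  have hV₀deg : V₀.degree < (d : ℕ) := hQdeg ▸ degree_modByMonic_lt V hmonic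
  refine ⟨U₀, V₀, ?_, ?_, hid⟩
  · -- degree U₀ + 2 ≤ d
    have hV₀Q' : (V₀ * derivative Q).degree ≤ ((2 * d - 2 : ℕ) : WithBot ℕ) := by
      rcases eq_or_ne (V₀ * derivative Q) 0 with h0 | h0
      · rw [h0, degree_zero]; exact bot_le
      · have hV0 : V₀ ≠ 0 := fun h => h0 (by rw [h, zero_mul])
        have hQ'0 : derivative Q ≠ 0 := fun h => h0 (by rw [h, mul_zero])
        have h1 : V₀.natDegree < d := by
          rw [degree_eq_natDegree hV0] at hV₀deg; exact_mod_cast hV₀deg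
        have h2 : (derivative Q).natDegree < d := by
          have := degree_derivative_lt hmonic.ne_zero
          rw [hQdeg, degree_eq_natDegree hQ'0] at this; exact_mod_cast this
        calc (V₀ * derivative Q).degree ≤ V₀.degree + (derivative Q).degree :=
              degree_mul_le _ _
          _ ≤ ((2 * d - 2 : ℕ) : WithBot ℕ) := by
              rw [degree_eq_natDegree hV0, degree_eq_natDegree hQ'0]
              exact_mod_cast (by omega : V₀.natDegree + (derivative Q).natDegree ≤ 2 * d - 2)
    have hU₀Q : (U₀ * Q).degree ≤ ((2 * d - 2 : ℕ) : WithBot ℕ) := by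
      have : U₀ * Q = 1 - V₀ * derivative Q := by linear_combination hid
      rw [this]
      refine (degree_sub_le _ _).trans (max_le ?_ hV₀Q')
      rw [degree_one]
      exact_mod_cast (by omega : 0 ≤ 2 * d - 2)
    rcases eq_or_ne U₀ 0 with h0 | h0
    · rw [h0, degree_zero, WithBot.bot_add]; exact bot_le
    · rw [hmonic.degree_mul, hQdeg, degree_eq_natDegree h0] at hU₀Q
      rw [degree_eq_natDegree h0]
      have : U₀.natDegree + d ≤ 2 * d - 2 := by exact_mod_cast hU₀Q
      exact_mod_cast (by omega : U₀.natDegree + 2 ≤ d)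
  · -- degree V₀ + 1 ≤ d
    rcases eq_or_ne V₀ 0 with h0 | h0
    · rw [h0, degree_zero, WithBot.bot_add]; exact bot_le
    · rw [degree_eq_natDegree h0] at hV₀deg ⊢
      have : V₀.natDegree < d := by exact_mod_cast hV₀deg
      exact_mod_cast (by omega : V₀.natDegree + 1 ≤ d)
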